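/- Every idempotent polymorphism (of any arity) of the partially reflexive path P_{10α01} is a projection. -/

import Mathlib

/-- Edge relation of the partially reflexive path on `Fin n` with loops given by `β`. -/
def pathEdge (n : ℕ) (β : Fin n → Bool) (x y : Fin n) : Prop :=
  x.val + 1 = y.val ∨ y.val + 1 = x.val ∨ (x = y ∧ β x = true)

namespace PathProjAux

structure Ctx (n k : ℕ) (β : Fin n → Bool) (f : (Fin k → Fin n) → Fin n) : Prop where
  hn : 4 ≤ n
  hb0 : ∀ x : Fin n, x.val = 0 → β x = true
  hb1 : ∀ x : Fin n, x.val = 1 → β x = false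
  hb2 : ∀ x : Fin n, x.val = n - 2 → β x = false
  hb3 : ∀ x : Fin n, x.val = n - 1 → β x = true
  poly : ∀ x y : Fin k → Fin n, (∀ j, pathEdge n β (x j) (y j)) → pathEdge n β (f x) (f y)
  idem : ∀ v : Fin n, f (fun _ => v) = v

def fv {n : ℕ} (hn : 4 ≤ n) (m : ℕ) : Fin n := ⟨min m (n-1), by omega⟩

section

variable {n k : ℕ} {β : Fin n → Bool} {f : (Fin k → Fin n) → Fin n}

@[simp] lemma fv_val (hn : 4 ≤ n) (m : ℕ) : (fv hn m).val = min m (n-1) := rfl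

lemma lip {x y : Fin n} (h : pathEdge n β x y) : x.val ≤ y.val + 1 ∧ y.val ≤ x.val + 1 := by
  rcases h with h | h | ⟨h, _⟩
  · omega
  · omega
  · subst h; omega

lemma mkEdge (C : Ctx n k β f) {x y : Fin n}
    (h : x.val + 1 = y.val ∨ y.val + 1 = x.val ∨ (x.val = y.val ∧ (x.val = 0 ∨ x.val = n-1))) :
    pathEdge n β x y := by
  rcases h with h | h | ⟨hxy, hl⟩
  · exact Or.inl h
  · exact Or.inr (Or.inl h)
  · have hx : x = y := Fin.ext hxy
    refine Or.inr (Or.inr ⟨hx, ?_⟩)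
    rcases hl with h0 | h1
    · exact C.hb0 x h0
    · exact C.hb3 x h1

lemma pin0 {x y : Fin n} (h : pathEdge n β x y) (hy : y.val = 0) : x.val ≤ 1 := by
  have := lip h; omega

lemma pin1 (C : Ctx n k β f) {x y : Fin n} (h : pathEdge n β x y) (hy : y.val = 1) :
    x.val = 0 ∨ x.val = 2 := by
  rcases h with h | h | ⟨hxy, hb⟩
  · left; omega
  · right; omega
  · exfalso; subst hxy; rw [C.hb1 x hy] at hb; exact Bool.false_ne_true hb

lemma pin2 (C : Ctx n k β f) {x y : Fin n} (h : pathEdge n β x y) (hy : y.val = n-2) :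
    x.val = n-3 ∨ x.val = n-1 := by
  have hn := C.hn
  rcases h with h | h | ⟨hxy, hb⟩
  · left; omega
  · right; omega
  · exfalso; subst hxy; rw [C.hb2 x hy] at hb; exact Bool.false_ne_true hb

lemma pin3 (C : Ctx n k β f) {x y : Fin n} (h : pathEdge n β x y) (hy : y.val = n-1) :
    x.val = n-2 ∨ x.val = n-1 := by
  have hn := C.hn
  have hx := x.isLt
  rcases h with h | h | ⟨hxy, hb⟩
  · left; omega
  · exfalso; omega
  · right; subst hxy; omega

/-- tuple with value 1 on `S`, 0 elsewhere -/
def eT (hn : 4 ≤ n) (S : Finset (Fin k)) : Fin k → Fin n :=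
  fun j => if j ∈ S then fv hn 1 else fv hn 0

/-- tuple with value n-2 on `S`, n-1 elsewhere -/
def bT (hn : 4 ≤ n) (S : Finset (Fin k)) : Fin k → Fin n :=
  fun j => if j ∈ S then fv hn (n-2) else fv hn (n-1)

/-- two-level tuple: value m on `S`, m+1 elsewhere -/
def lowT (hn : 4 ≤ n) (S : Finset (Fin k)) (m : ℕ) : Fin k → Fin n :=
  fun j => if j ∈ S then fv hn m else fv hn (m+1)

/-- move all coordinates up by m, capped at n-1 -/
def uN (hn : 4 ≤ n) (m : ℕ) (t : Fin k → Fin n) : Fin k → Fin n :=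
  fun j => fv hn ((t j).val + m)

/-- move all coordinates down by m, floored at 0 -/
def dN (m : ℕ) (t : Fin k → Fin n) : Fin k → Fin n :=
  fun j => ⟨(t j).val - m, lt_of_le_of_lt (Nat.sub_le _ _) (t j).isLt⟩

@[simp] lemma uN_val (hn : 4 ≤ n) (m : ℕ) (t : Fin k → Fin n) (j : Fin k) :
    (uN hn m t j).val = min ((t j).val + m) (n-1) := rfl

@[simp] lemma dN_val (m : ℕ) (t : Fin k → Fin n) (j : Fin k) :
    (dN m t j).val = (t j).val - m := rfl

lemma uN_zero (hn : 4 ≤ n) (t : Fin k → Fin n) : uN hn 0 t = t := by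
  funext j; apply Fin.ext; have := (t j).isLt; simp; omega

lemma dN_zero (t : Fin k → Fin n) : dN 0 t = t := by
  funext j; apply Fin.ext; simp

lemma uN_uN (hn : 4 ≤ n) (m : ℕ) (t : Fin k → Fin n) :
    uN hn 1 (uN hn m t) = uN hn (m+1) t := by
  funext j; apply Fin.ext; simp; omega

lemma dN_dN (m : ℕ) (t : Fin k → Fin n) :
    dN 1 (dN m t) = dN (m+1) t := by
  funext j; apply Fin.ext; simp; omega

lemma edge_u1 (C : Ctx n k β f) (t : Fin k → Fin n) (j : Fin k) :
    pathEdge n β (t j) (uN C.hn 1 t j) := by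
  apply mkEdge C
  have := (t j).isLt
  have hn := C.hn
  simp
  omega

lemma edge_d1 (C : Ctx n k β f) (t : Fin k → Fin n) (j : Fin k) :
    pathEdge n β (t j) (dN 1 t j) := by
  apply mkEdge C
  have := (t j).isLt
  have hn := C.hn
  simp
  omega

lemma f_uN (C : Ctx n k β f) (t : Fin k → Fin n) :
    ∀ m, (f (uN C.hn m t)).val ≤ (f t).val + m ∧ (f t).val ≤ (f (uN C.hn m t)).val + m := by
  intro m
  induction m with
  | zero => rw [uN_zero]; omega
  | succ m ih =>
      have e : pathEdge n β (f (uN C.hn m t)) (f (uN C.hn (m+1) t)) := by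
        rw [← uN_uN]
        exact C.poly _ _ (fun j => edge_u1 C _ j)
      have := lip e
      omega

lemma f_dN (C : Ctx n k β f) (t : Fin k → Fin n) :
    ∀ m, (f (dN m t)).val ≤ (f t).val + m ∧ (f t).val ≤ (f (dN m t)).val + m := by
  intro m
  induction m with
  | zero => rw [dN_zero]; omega
  | succ m ih =>
      have e : pathEdge n β (f (dN m t)) (f (dN (m+1) t)) := by
        rw [← dN_dN]
        exact C.poly _ _ (fun j => edge_d1 C _ j)
      have := lip e
      omega

/-- the family of "1-sets": `S ∈ U` iff `f` of the indicator tuple of `S` is 1. -/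
def Uset (C : Ctx n k β f) (S : Finset (Fin k)) : Prop := (f (eT C.hn S)).val = 1

lemma a_le (C : Ctx n k β f) (S : Finset (Fin k)) : (f (eT C.hn S)).val ≤ 1 := by
  have e : pathEdge n β (f (eT C.hn S)) (f (fun _ => fv C.hn 0)) := by
    apply C.poly
    intro j
    apply mkEdge C
    have hn := C.hn
    by_cases hj : j ∈ S <;> simp [eT, hj] <;> omega
  rw [C.idem] at e
  apply pin0 e
  have hn := C.hn
  simp

lemma U_univ (C : Ctx n k β f) : Uset C Finset.univ := by
  have he : eT C.hn (Finset.univ : Finset (Fin k)) = fun _ => fv C.hn 1 := by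
    funext j; simp [eT]
  have hn := C.hn
  rw [Uset, he, C.idem]
  simp; omega

lemma disjU (C : Ctx n k β f) {S T : Finset (Fin k)} (hST : ∀ j, j ∈ S → j ∉ T)
    (hS : Uset C S) (hT : Uset C T) : False := by
  have e : pathEdge n β (f (eT C.hn S)) (f (eT C.hn T)) := by
    apply C.poly
    intro j
    apply mkEdge C
    have hn := C.hn
    by_cases h1 : j ∈ S
    · have h2 : j ∉ T := hST j h1
      simp [eT, h1, h2]; omega
    · by_cases h2 : j ∈ T <;> simp [eT, h1, h2] <;> omega
  rcases pin1 C e hT with h | h <;> rw [hS] at h <;> omega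

lemma b_mem (C : Ctx n k β f) (S : Finset (Fin k)) :
    (f (bT C.hn S)).val = n-2 ∨ (f (bT C.hn S)).val = n-1 := by
  have e : pathEdge n β (f (bT C.hn S)) (f (fun _ => fv C.hn (n-1))) := by
    apply C.poly
    intro j
    apply mkEdge C
    have hn := C.hn
    by_cases hj : j ∈ S <;> simp [bT, hj] <;> omega
  rw [C.idem] at e
  apply pin3 C e
  have hn := C.hn
  simp

lemma uN_eT (C : Ctx n k β f) (S : Finset (Fin k)) :
    uN C.hn (n-2) (eT C.hn S) = bT C.hn Sᶜ := by
  have hn := C.hn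
  funext j; apply Fin.ext
  by_cases hj : j ∈ S <;> simp [eT, bT, uN, hj] <;> omega

lemma L4 (C : Ctx n k β f) {S : Finset (Fin k)} (hS : ¬ Uset C S) :
    (f (bT C.hn Sᶜ)).val = n - 2 := by
  have hn := C.hn
  have ha : (f (eT C.hn S)).val = 0 := by
    have h1 := a_le C S
    rw [Uset] at hS
    omega
  have hL := (f_uN C (eT C.hn S) (n-2)).1
  rw [uN_eT C S] at hL
  rcases b_mem C Sᶜ with h | h
  · exact h
  · omega

lemma b_disj (C : Ctx n k β f) (S : Finset (Fin k)) :
    ¬ ((f (bT C.hn S)).val = n-2 ∧ (f (bT C.hn Sᶜ)).val = n-2) := by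
  rintro ⟨h1, h2⟩
  have hn := C.hn
  have e : pathEdge n β (f (bT C.hn S)) (f (bT C.hn Sᶜ)) := by
    apply C.poly
    intro j
    apply mkEdge C
    by_cases hj : j ∈ S <;> simp [bT, hj] <;> omega
  rcases pin2 C e h2 with h | h <;> omega

lemma dichU (C : Ctx n k β f) (S : Finset (Fin k)) : Uset C S ∨ Uset C Sᶜ := by
  by_contra hc
  push_neg at hc
  have h1 := L4 C hc.1
  have h2 := L4 C hc.2
  rw [compl_compl] at h2
  exact b_disj C Sᶜ ⟨h1, by rw [compl_compl]; exact h2⟩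

lemma notU_compl (C : Ctx n k β f) {S : Finset (Fin k)} (hS : Uset C S) : ¬ Uset C Sᶜ := by
  intro h
  exact disjU C (fun j hj => by simp [hj]) hS h

lemma b_char_pos (C : Ctx n k β f) {S : Finset (Fin k)} (hS : Uset C S) :
    (f (bT C.hn S)).val = n-2 := by
  have := L4 C (notU_compl C hS)
  rwa [compl_compl] at this

lemma b_char_neg (C : Ctx n k β f) {S : Finset (Fin k)} (hS : ¬ Uset C S) :
    (f (bT C.hn S)).val = n-1 := by
  have h1 := L4 C hS
  rcases b_mem C S with h | h
  · exact absurd ⟨h, h1⟩ (b_disj C S)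
  · exact h

lemma lowT_zero (C : Ctx n k β f) (S : Finset (Fin k)) :
    lowT C.hn S 0 = eT C.hn Sᶜ := by
  funext j; by_cases hj : j ∈ S <;> simp [lowT, eT, hj]

lemma lowT_top (C : Ctx n k β f) (S : Finset (Fin k)) :
    lowT C.hn S (n-2) = bT C.hn S := by
  have hn := C.hn
  funext j; apply Fin.ext
  by_cases hj : j ∈ S <;> simp [lowT, bT, hj] <;> omega

lemma uN_lowT (C : Ctx n k β f) (S : Finset (Fin k)) (m m' : ℕ) (h : m + m' ≤ n-2) :
    uN C.hn m' (lowT C.hn S m) = lowT C.hn S (m + m') := by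
  have hn := C.hn
  funext j; apply Fin.ext
  by_cases hj : j ∈ S <;> simp [lowT, uN, hj] <;> omega

lemma lowT_base_pos (C : Ctx n k β f) {S : Finset (Fin k)} (hS : Uset C S) :
    (f (lowT C.hn S 0)).val = 0 := by
  rw [lowT_zero C S]
  have h1 := a_le C Sᶜ
  have h2 := notU_compl C hS
  rw [Uset] at h2
  omega

lemma lowT_base_neg (C : Ctx n k β f) {S : Finset (Fin k)} (hS : ¬ Uset C S) :
    (f (lowT C.hn S 0)).val = 1 := by
  rw [lowT_zero C S]
  rcases dichU C S with h | h
  · exact absurd h hS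
  · exact h

lemma two_pos (C : Ctx n k β f) {S : Finset (Fin k)} (hS : Uset C S) (m : ℕ) (hm : m ≤ n-2) :
    (f (lowT C.hn S m)).val = m := by
  have hn := C.hn
  have base := lowT_base_pos C hS
  have top : (f (lowT C.hn S (n-2))).val = n-2 := by
    rw [lowT_top C S]; exact b_char_pos C hS
  have h1 := (f_uN C (lowT C.hn S 0) m).1
  rw [uN_lowT C S 0 m (by omega)] at h1
  simp only [Nat.zero_add] at h1
  have h2 := (f_uN C (lowT C.hn S m) (n-2-m)).1
  rw [uN_lowT C S m (n-2-m) (by omega)] at h2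
  have hmm : m + (n-2-m) = n-2 := by omega
  rw [hmm] at h2
  omega

lemma two_neg (C : Ctx n k β f) {S : Finset (Fin k)} (hS : ¬ Uset C S) (m : ℕ) (hm : m ≤ n-2) :
    (f (lowT C.hn S m)).val = m+1 := by
  have hn := C.hn
  have base := lowT_base_neg C hS
  have top : (f (lowT C.hn S (n-2))).val = n-1 := by
    rw [lowT_top C S]; exact b_char_neg C hS
  have h1 := (f_uN C (lowT C.hn S 0) m).1
  rw [uN_lowT C S 0 m (by omega)] at h1
  simp only [Nat.zero_add] at h1
  have h2 := (f_uN C (lowT C.hn S m) (n-2-m)).1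
  rw [uN_lowT C S m (n-2-m) (by omega)] at h2
  have hmm : m + (n-2-m) = n-2 := by omega
  rw [hmm] at h2
  omega

/-- The key gadget: if `S ∈ U` splits as disjoint `A ∪ B` with `B ∉ U`, then `A ∈ U`. -/
lemma gadget (C : Ctx n k β f) {S A B : Finset (Fin k)} (hS : Uset C S) (hB : ¬ Uset C B)
    (hd : ∀ j, j ∈ A → j ∉ B) (hc : ∀ j, j ∈ S ↔ (j ∈ A ∨ j ∈ B)) : Uset C A := by
  have hn := C.hn
  set gT : Fin k → Fin n :=
    fun j => if j ∈ A then fv C.hn (n-1) else if j ∈ B then fv C.hn (n-2) else fv C.hn (n-3)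
    with hgT
  have hUBc : Uset C Bᶜ := by
    rcases dichU C B with h | h
    · exact absurd h hB
    · exact h
  have hUSc : ¬ Uset C Sᶜ := notU_compl C hS
  -- w1 = lowT Bᶜ (n-2) : value n-2 on Bᶜ, n-1 on B ; f-value n-2
  have hw1 : (f (lowT C.hn Bᶜ (n-2))).val = n-2 := two_pos C hUBc (n-2) (by omega)
  -- w3 = lowT Sᶜ (n-2) : value n-2 on Sᶜ, n-1 on S ; f-value n-1
  have hw3 : (f (lowT C.hn Sᶜ (n-2))).val = n-1 := by
    have := two_neg C hUSc (n-2) (by omega)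
    have h2 : n - 2 + 1 = n - 1 := by omega
    rwa [h2] at this
  have e1 : pathEdge n β (f gT) (f (lowT C.hn Bᶜ (n-2))) := by
    apply C.poly
    intro j
    apply mkEdge C
    by_cases hA : j ∈ A
    · have hBj : j ∉ B := hd j hA
      simp [hgT, lowT, hA, hBj]; omega
    · by_cases hBj : j ∈ B <;> simp [hgT, lowT, hA, hBj] <;> omega
  have e3 : pathEdge n β (f gT) (f (lowT C.hn Sᶜ (n-2))) := by
    apply C.poly
    intro j
    apply mkEdge C
    by_cases hA : j ∈ A
    · have hBj : j ∉ B := hd j hA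
      have hSj : j ∈ S := (hc j).2 (Or.inl hA)
      simp [hgT, lowT, hA, hBj, hSj]; omega
    · by_cases hBj : j ∈ B
      · have hSj : j ∈ S := (hc j).2 (Or.inr hBj)
        simp [hgT, lowT, hA, hBj, hSj]; omega
      · have hSj : j ∉ S := fun hj => by rcases (hc j).1 hj with h | h <;> [exact hA h; exact hBj h]
        simp [hgT, lowT, hA, hBj, hSj]; omega
  have hg : (f gT).val = n-1 := by
    rcases pin2 C e1 hw1 with h | h
    · rcases pin3 C e3 hw3 with h' | h' <;> omega
    · exact h
  have hdn : dN (n-2) gT = eT C.hn A := by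
    funext j; apply Fin.ext
    by_cases hA : j ∈ A
    · simp [hgT, eT, hA]; omega
    · by_cases hBj : j ∈ B <;> simp [hgT, eT, hA, hBj] <;> omega
  have hL := (f_dN C gT (n-2)).2
  rw [hdn] at hL
  have hA := a_le C A
  rw [Uset]
  omega

lemma interU (C : Ctx n k β f) {S T : Finset (Fin k)} (hS : Uset C S) (hT : Uset C T) :
    Uset C (S ∩ T) := by
  apply gadget C (S := S) (B := S \ T) hS
  · intro h
    exact disjU C (fun j hj => by simp at hj ⊢; exact fun h' => absurd h' hj.2) h hT
  · intro j hj
    simp at hj ⊢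
    exact fun _ => hj.2
  · intro j
    simp
    tauto

lemma Uset_empty (C : Ctx n k β f) : ¬ Uset C (∅ : Finset (Fin k)) := by
  have he : eT C.hn (∅ : Finset (Fin k)) = fun _ => fv C.hn 0 := by
    funext j; simp [eT]
  have hn := C.hn
  rw [Uset, he, C.idem]
  simp

lemma exists_principal (C : Ctx n k β f) : ∃ i : Fin k, ∀ S, Uset C S ↔ i ∈ S := by
  have key : ∀ c (S : Finset (Fin k)), S.card ≤ c → Uset C S → ∃ i, Uset C {i} := by
    intro c
    induction c with
    | zero =>
        intro S hc hS
        have hSe : S = ∅ := Finset.card_eq_zero.mp (le_antisymm hc (Nat.zero_le _))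
        rw [hSe] at hS
        exact absurd hS (Uset_empty C)
    | succ c ih =>
        intro S hc hS
        have hne : S.Nonempty := by
          rcases Finset.eq_empty_or_nonempty S with h | h
          · rw [h] at hS; exact absurd hS (Uset_empty C)
          · exact h
        obtain ⟨i, hi⟩ := hne
        by_cases hUi : Uset C {i}
        · exact ⟨i, hUi⟩
        · have hUc : Uset C ({i}ᶜ) := by
            rcases dichU C {i} with h | h
            · exact absurd h hUi
            · exact h
          have h2 : Uset C (S ∩ {i}ᶜ) := interU C hS hUc
          have heq : S ∩ {i}ᶜ = S.erase i := by
            ext j; simp [Finset.mem_erase, and_comm]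
          rw [heq] at h2
          have hcard := Finset.card_erase_of_mem hi
          exact ih _ (by omega) h2
  obtain ⟨i, hi⟩ := key (Finset.univ : Finset (Fin k)).card Finset.univ le_rfl (U_univ C)
  refine ⟨i, fun S => ⟨fun hS => ?_, fun hiS => ?_⟩⟩
  · by_contra hiS
    exact disjU C (fun j hj => by simp at hj; rw [hj]; exact hiS) hi hS
  · by_contra hS
    have hUc : Uset C Sᶜ := by
      rcases dichU C S with h | h
      · exact absurd h hS
      · exact h
    exact disjU C (fun j hj => by simp at hj; rw [hj]; simp [hiS]) hi hUc

/-- bottom induction: Z(M) and O(M) -/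
lemma ZO (C : Ctx n k β f) {i : Fin k} (hmem : ∀ S, Uset C S ↔ i ∈ S) :
    ∀ M : ℕ,
      (∀ t : Fin k → Fin n, (∀ j, (t j).val ≤ M) → (t i).val = 0 → (f t).val = 0)
      ∧ (∀ t : Fin k → Fin n, (∀ j, (t j).val ≤ M) → (t i).val = 1 → (f t).val = 1) := by
  have hn := C.hn
  -- two-level instances
  have hZ1 : ∀ t : Fin k → Fin n, (∀ j, (t j).val ≤ 1) → (t i).val = 0 → (f t).val = 0 := by
    intro t ht hti
    have he : t = eT C.hn (Finset.univ.filter (fun j => (t j).val = 1)) := by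
      funext j; apply Fin.ext
      by_cases hj : (t j).val = 1
      · simp [eT, hj] <;> omega
      · have : (t j).val = 0 := by have := ht j; omega
        simp [eT, hj, this] <;> omega
    have hnU : ¬ Uset C (Finset.univ.filter (fun j => (t j).val = 1)) := by
      rw [hmem]; simp <;> omega
    rw [Uset] at hnU
    rw [he]
    have := a_le C (Finset.univ.filter (fun j => (t j).val = 1))
    omega
  intro M
  induction M with
  | zero =>
      constructor
      · intro t ht hti; exact hZ1 t (fun j => by have := ht j; omega) hti
      · intro t ht hti; have := ht i; omega
  | succ M ih =>
      have hO : ∀ t : Fin k → Fin n, (∀ j, (t j).val ≤ M+1) → (t i).val = 1 → (f t).val = 1 := by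
        intro t ht hti
        -- upper bound: neighbor dN 1 t has i-value 0
        have hd : (f (dN 1 t)).val = 0 := by
          apply ih.1
          · intro j; simp; have := ht j; omega
          · simp; omega
        have ed : pathEdge n β (f t) (f (dN 1 t)) := C.poly _ _ (fun j => edge_d1 C t j)
        have hub : (f t).val ≤ 1 := pin0 ed hd
        -- lower bound via top
        have htop : uN C.hn (n-2) t = bT C.hn (Finset.univ.filter (fun j => (t j).val = 0)) := by
          funext j; apply Fin.ext
          by_cases hj : (t j).val = 0
          · simp [bT, uN, hj] <;> omega
          · have h1 : 1 ≤ (t j).val := by omega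
            have h2 := (t j).isLt
            simp [bT, uN, hj]; omega
        have hnU : ¬ Uset C (Finset.univ.filter (fun j => (t j).val = 0)) := by
          rw [hmem]; simp; omega
        have hb := b_char_neg C hnU
        have hL := (f_uN C t (n-2)).1
        rw [htop, hb] at hL
        omega
      refine ⟨?_, hO⟩
      intro t ht hti
      match M, ih with
      | 0, _ => exact hZ1 t ht hti
      | (m+1), ih =>
        have hd : (f (dN 1 t)).val = 0 := by
          apply ih.1
          · intro j; simp; have := ht j; omega
          · simp; omega
        have ed : pathEdge n β (f t) (f (dN 1 t)) := C.poly _ _ (fun j => edge_d1 C t j)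
        have hub : (f t).val ≤ 1 := pin0 ed hd
        -- second neighbor r
        set r : Fin k → Fin n := fun j => if (t j).val = 0 then fv C.hn 1 else dN 1 t j with hr
        have er : pathEdge n β (f t) (f r) := by
          apply C.poly
          intro j
          apply mkEdge C
          by_cases hj : (t j).val = 0 <;> simp [hr, hj] <;> omega
        have hrv : (f r).val = 1 := by
          apply ih.2
          · intro j
            by_cases hj : (t j).val = 0
            · simp [hr, hj] <;> omega
            · simp [hr, hj]; have := ht j; omega
          · simp [hr, hti] <;> omega
        rcases pin1 C er hrv with h | h <;> omega

/-- top induction: Z'(M) and O'(M) -/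
lemma ZO' (C : Ctx n k β f) {i : Fin k} (hmem : ∀ S, Uset C S ↔ i ∈ S) :
    ∀ M : ℕ,
      (∀ t : Fin k → Fin n, (∀ j, n-1 ≤ (t j).val + M) → (t i).val = n-1 → (f t).val = n-1)
      ∧ (∀ t : Fin k → Fin n, (∀ j, n-1 ≤ (t j).val + M) → (t i).val = n-2 → (f t).val = n-2) := by
  have hn := C.hn
  have hZ1 : ∀ t : Fin k → Fin n, (∀ j, n-2 ≤ (t j).val) → (t i).val = n-1 → (f t).val = n-1 := by
    intro t ht hti
    have he : t = bT C.hn (Finset.univ.filter (fun j => (t j).val = n-2)) := by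
      funext j; apply Fin.ext
      by_cases hj : (t j).val = n-2
      · simp [bT, hj]; omega
      · have h1 := ht j; have h2 := (t j).isLt
        simp [bT, hj]; omega
    have hnU : ¬ Uset C (Finset.univ.filter (fun j => (t j).val = n-2)) := by
      rw [hmem]; simp; omega
    rw [he]
    exact b_char_neg C hnU
  intro M
  induction M with
  | zero =>
      constructor
      · intro t ht hti; exact hZ1 t (fun j => by have := ht j; omega) hti
      · intro t ht hti; have := ht i; omega
  | succ M ih =>
      have hO : ∀ t : Fin k → Fin n, (∀ j, n-1 ≤ (t j).val + (M+1)) → (t i).val = n-2 →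
          (f t).val = n-2 := by
        intro t ht hti
        have hu : (f (uN C.hn 1 t)).val = n-1 := by
          apply ih.1
          · intro j; simp; have := ht j; have := (t j).isLt; omega
          · simp [hti] <;> omega
        have eu : pathEdge n β (f t) (f (uN C.hn 1 t)) := C.poly _ _ (fun j => edge_u1 C t j)
        have hub : (f t).val = n-2 ∨ (f t).val = n-1 := pin3 C eu hu
        -- down to eT Y
        have hdn : dN (n-2) t = eT C.hn (Finset.univ.filter (fun j => (t j).val = n-1)) := by
          funext j; apply Fin.ext
          by_cases hj : (t j).val = n-1
          · simp [eT, hj]; omega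
          · have h2 := (t j).isLt
            simp [eT, hj]; omega
        have hnU : ¬ Uset C (Finset.univ.filter (fun j => (t j).val = n-1)) := by
          rw [hmem]; simp; omega
        have ha : (f (eT C.hn (Finset.univ.filter (fun j => (t j).val = n-1)))).val = 0 := by
          have := a_le C (Finset.univ.filter (fun j => (t j).val = n-1))
          rw [Uset] at hnU
          omega
        have hL := (f_dN C t (n-2)).2
        rw [hdn, ha] at hL
        omega
      refine ⟨?_, hO⟩
      intro t ht hti
      match M, ih with
      | 0, _ => exact hZ1 t (fun j => by have := ht j; omega) hti
      | (m+1), ih =>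
        have hu : (f (uN C.hn 1 t)).val = n-1 := by
          apply ih.1
          · intro j; simp; have := ht j; have := (t j).isLt; omega
          · simp [hti] <;> omega
        have eu : pathEdge n β (f t) (f (uN C.hn 1 t)) := C.poly _ _ (fun j => edge_u1 C t j)
        have hub : (f t).val = n-2 ∨ (f t).val = n-1 := pin3 C eu hu
        set r : Fin k → Fin n := fun j => if (t j).val = n-1 then fv C.hn (n-2) else uN C.hn 1 t j
          with hr
        have er : pathEdge n β (f t) (f r) := by
          apply C.poly
          intro j
          apply mkEdge C
          have h2 := (t j).isLt
          by_cases hj : (t j).val = n-1 <;> simp [hr, hj] <;> omega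
        have hrv : (f r).val = n-2 := by
          apply ih.2
          · intro j
            have h2 := (t j).isLt
            by_cases hj : (t j).val = n-1
            · simp [hr, hj]; omega
            · simp [hr, hj]; have := ht j; omega
          · simp [hr, hti] <;> omega
        rcases pin2 C er hrv with h | h <;> omega

lemma main (C : Ctx n k β f) : ∃ i : Fin k, ∀ t : Fin k → Fin n, f t = t i := by
  have hn := C.hn
  obtain ⟨i, hmem⟩ := exists_principal C
  refine ⟨i, fun t => ?_⟩
  have hZ := (ZO C hmem (n-1)).1
  have hZ' := (ZO' C hmem (n-1)).1
  set v := (t i).val with hv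
  have hvlt : v < n := (t i).isLt
  -- upper bound
  have h1 : (f (dN v t)).val = 0 := by
    apply hZ
    · intro j; have := (t j).isLt; simp; omega
    · simp; omega
  have hup := (f_dN C t v).2
  rw [h1] at hup
  -- lower bound
  have h2 : (f (uN C.hn (n-1-v) t)).val = n-1 := by
    apply hZ'
    · intro j; simp <;> omega
    · simp <;> omega
  have hlo := (f_uN C t (n-1-v)).1
  rw [h2] at hlo
  apply Fin.ext
  omega

end

end PathProjAux

/-- Every idempotent polymorphism, of any arity `k`, of the partially reflexive
path `P_{10α01}` (first vertex looped, second loopless, second-to-last loopless,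
last looped, `α` arbitrary in between) is a projection. -/
theorem idempotent_polymorphisms_are_projections
    (n : ℕ) (hn : 4 ≤ n) (β : Fin n → Bool)
    (h0 : β ⟨0, by omega⟩ = true) (h1 : β ⟨1, by omega⟩ = false)
    (h2 : β ⟨n - 2, by omega⟩ = false) (h3 : β ⟨n - 1, by omega⟩ = true)
    (k : ℕ) (f : (Fin k → Fin n) → Fin n)
    (hpoly : ∀ x y : Fin k → Fin n, (∀ j, pathEdge n β (x j) (y j)) →
      pathEdge n β (f x) (f y))
    (hidem : ∀ v : Fin n, f (fun _ => v) = v) :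
    ∃ i : Fin k, ∀ t : Fin k → Fin n, f t = t i := by
  have hb0 : ∀ x : Fin n, x.val = 0 → β x = true := by
    intro x hx
    have : x = ⟨0, by omega⟩ := Fin.ext hx
    rw [this]; exact h0
  have hb1 : ∀ x : Fin n, x.val = 1 → β x = false := by
    intro x hx
    have : x = ⟨1, by omega⟩ := Fin.ext hx
    rw [this]; exact h1
  have hb2 : ∀ x : Fin n, x.val = n - 2 → β x = false := by
    intro x hx
    have : x = ⟨n - 2, by omega⟩ := Fin.ext hx
    rw [this]; exact h2
  have hb3 : ∀ x : Fin n, x.val = n - 1 → β x = true := by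
    intro x hx
    have : x = ⟨n - 1, by omega⟩ := Fin.ext hx
    rw [this]; exact h3
  exact PathProjAux.main ⟨hn, hb0, hb1, hb2, hb3, hpoly, hidem⟩
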